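/- arXiv:1706.08174 — 2 statements merged into one kernel-verified Lean document; each statement's English description precedes it below -/
import Mathlib

section
/- For every 1 ≤ d < ω and every infinite cardinal κ, HL^tc(d,<κ,κ) implies that HL(d,σ,κ) holds for every cardinal σ with 0 < σ < κ. -/
open Cardinal Set

/-- A node of `^{<κ}κ`: a function from an ordinal `len < κ` into the ordinals `< κ`,
normalized to take value `0` at or beyond its length (so that equality of nodes is
extensional). -/
structure SeqNode (κ : Cardinal.{0}) : Type 1 where
  len : Ordinal.{0}
  len_lt : len < κ.ord
  val : Ordinal.{0} → Ordinal.{0}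
  val_lt : ∀ β < len, val β < κ.ord
  val_eq_zero : ∀ β, len ≤ β → val β = 0

namespace SeqNode

variable {κ : Cardinal.{0}}

/-- `s.Init t` means `s ⊑ t`, i.e. `s` is an initial segment of `t`. -/
def Init (s t : SeqNode κ) : Prop :=
  s.len ≤ t.len ∧ ∀ β < s.len, s.val β = t.val β

/-- The restriction `t ↾ β` of `t` to length `min β t.len`. -/
noncomputable def restrict (t : SeqNode κ) (β : Ordinal.{0}) : SeqNode κ where
  len := min β t.len
  len_lt := lt_of_le_of_lt (min_le_right _ _) t.len_lt
  val := fun γ => if γ < min β t.len then t.val γ else 0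
  val_lt := fun γ hγ => by
    try dsimp only
    rw [if_pos hγ]
    exact t.val_lt γ (lt_of_lt_of_le hγ (min_le_right _ _))
  val_eq_zero := fun γ hγ => by
    try dsimp only
    rw [if_neg (not_lt.mpr hγ)]

end SeqNode

/-- The level `T(α)`: nodes of `T` of length `α`. -/
def SeqLevel {κ : Cardinal.{0}} (T : Set (SeqNode κ)) (α : Ordinal.{0}) : Set (SeqNode κ) :=
  {t ∈ T | t.len = α}

/-- A tree: a set of nodes closed under initial segments. -/
def IsSeqTree {κ : Cardinal.{0}} (T : Set (SeqNode κ)) : Prop :=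
  ∀ t ∈ T, ∀ s : SeqNode κ, s.Init t → s ∈ T

/-- A branch of `T`: a subset of `T` linearly ordered by the initial segment relation. -/
def IsBranch {κ : Cardinal.{0}} (T b : Set (SeqNode κ)) : Prop :=
  b ⊆ T ∧ ∀ s ∈ b, ∀ t ∈ b, s.Init t ∨ t.Init s

/-- A maximal branch of `T`. -/
def IsMaximalBranch {κ : Cardinal.{0}} (T b : Set (SeqNode κ)) : Prop :=
  IsBranch T b ∧ ∀ b' : Set (SeqNode κ), IsBranch T b' → b ⊆ b' → b' = b

/-- `T` is perfect: every node has two incomparable extensions in `T`. -/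
def IsPerfect {κ : Cardinal.{0}} (T : Set (SeqNode κ)) : Prop :=
  ∀ t ∈ T, ∃ s ∈ T, ∃ u ∈ T, t.Init s ∧ t.Init u ∧ ¬ s.Init u ∧ ¬ u.Init s

/-- `T ⊆ ^{<κ}κ` is a regular tree of height `η`: it is a tree all of whose nodes
have length `< η`, it has nonempty levels of cardinality `< η.card` at every `α < η`,
every maximal branch meets every level `< η`, and it is perfect. -/
def IsRegularTreeIn (κ : Cardinal.{0}) (η : Ordinal.{0}) (T : Set (SeqNode κ)) : Prop :=
  IsSeqTree T ∧
  (∀ t ∈ T, t.len < η) ∧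
  (∀ α < η, (SeqLevel T α).Nonempty) ∧
  (∀ α < η, Cardinal.mk ↥(SeqLevel T α) < Cardinal.lift.{1} η.card) ∧
  (∀ b : Set (SeqNode κ), IsMaximalBranch T b → ∀ α < η, ∃ t ∈ b, t.len = α) ∧
  IsPerfect T

/-- A regular `κ`-tree. -/
def IsRegularTree (κ : Cardinal.{0}) (T : Set (SeqNode κ)) : Prop :=
  IsRegularTreeIn κ κ.ord T

/-- The truncation `T ∩ ^{<α}κ` of `T` below level `α`. -/
def TreeTrunc {κ : Cardinal.{0}} (T : Set (SeqNode κ)) (α : Ordinal.{0}) : Set (SeqNode κ) :=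
  {t ∈ T | t.len < α}

/-- The level product `⊗_{i<d} X_i`: tuples all of whose entries lie on one common level. -/
def LevelProd {κ : Cardinal.{0}} {d : ℕ} (X : Fin d → Set (SeqNode κ)) :
    Set (Fin d → SeqNode κ) :=
  {x | ∃ α : Ordinal.{0}, ∀ i, x i ∈ X i ∧ (x i).len = α}

/-- `X` dominates `Y`: every element of `Y` has an extension in `X`. -/
def Dominates {κ : Cardinal.{0}} (X Y : Set (SeqNode κ)) : Prop :=
  ∀ y ∈ Y, ∃ x ∈ X, SeqNode.Init y x

/-- `Cone t`: all extensions of `t`. -/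
def Cone {κ : Cardinal.{0}} (t : SeqNode κ) : Set (SeqNode κ) :=
  {s : SeqNode κ | t.Init s}

/-- `X` is a somewhere dense level matrix for trees `T` of height `η`. -/
def IsSDMatrixIn {κ : Cardinal.{0}} (η : Ordinal.{0}) {d : ℕ}
    (T X : Fin d → Set (SeqNode κ)) : Prop :=
  ∃ α β : Ordinal.{0}, α < β ∧ β < η ∧
    ∃ t : Fin d → SeqNode κ,
      (∀ i, t i ∈ SeqLevel (T i) α) ∧
      ∀ i, X i ⊆ SeqLevel (T i) β ∧
        Dominates (X i) (SeqLevel (T i) (α + 1) ∩ Cone (t i))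

/-- `X` is a somewhere dense level matrix for the regular `κ`-trees `T`. -/
def IsSDMatrix (κ : Cardinal.{0}) {d : ℕ} (T X : Fin d → Set (SeqNode κ)) : Prop :=
  IsSDMatrixIn κ.ord T X

/-- The coloring `c` is constant (monochromatic) on the level product of `X`. -/
def MonoOn {κ : Cardinal.{0}} {d : ℕ} (c : (Fin d → SeqNode κ) → Ordinal.{0})
    (X : Fin d → Set (SeqNode κ)) : Prop :=
  ∀ x ∈ LevelProd X, ∀ y ∈ LevelProd X, c x = c y

/-- The somewhere dense Halpern–Läuchli theorem `SDHL(d,σ,κ)`. -/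
def SDHL (d : ℕ) (σ κ : Cardinal.{0}) : Prop :=
  ∀ T : Fin d → Set (SeqNode κ), (∀ i, IsRegularTree κ (T i)) →
    ∀ c : (Fin d → SeqNode κ) → Ordinal.{0},
      (∀ x ∈ LevelProd T, c x < σ.ord) →
      ∃ X : Fin d → Set (SeqNode κ), (∀ i, X i ⊆ T i) ∧
        IsSDMatrix κ T X ∧ MonoOn c X

/-- `s` is an immediate successor of `t`. -/
def IsImmediateSucc {κ : Cardinal.{0}} (t s : SeqNode κ) : Prop :=
  t.Init s ∧ s.len = t.len + 1

/-- `A` is a cofinal subset of (the ordinals below) `η`. -/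
def CofinalIn (A : Set Ordinal.{0}) (η : Ordinal.{0}) : Prop :=
  A ⊆ Set.Iio η ∧ ∀ β < η, ∃ α ∈ A, β ≤ α

/-- `T'` is a strong subtree of the regular `κ`-tree `T` witnessed by the cofinal set
`A ⊆ κ` of splitting levels. -/
def IsStrongSubtree (κ : Cardinal.{0}) (T' T : Set (SeqNode κ)) (A : Set Ordinal.{0}) : Prop :=
  T' ⊆ T ∧ IsRegularTree κ T' ∧ CofinalIn A κ.ord ∧
    ∀ t ∈ T',
      (t.len ∈ A → ∀ s ∈ T, IsImmediateSucc t s → s ∈ T') ∧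
      (t.len ∉ A → ∃! s : SeqNode κ, s ∈ T' ∧ IsImmediateSucc t s)

/-- The strong tree Halpern–Läuchli theorem `HL(d,σ,κ)`. -/
def HL (d : ℕ) (σ κ : Cardinal.{0}) : Prop :=
  ∀ T : Fin d → Set (SeqNode κ), (∀ i, IsRegularTree κ (T i)) →
    ∀ c : (Fin d → SeqNode κ) → Ordinal.{0},
      (∀ x ∈ LevelProd T, c x < σ.ord) →
      ∃ T' : Fin d → Set (SeqNode κ), ∃ A : Set Ordinal.{0},
        (∀ i, IsStrongSubtree κ (T' i) (T i) A) ∧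
        ∀ x : Fin d → SeqNode κ, (∃ α ∈ A, ∀ i, x i ∈ SeqLevel (T' i) α) →
          ∀ y : Fin d → SeqNode κ, (∃ α ∈ A, ∀ i, y i ∈ SeqLevel (T' i) α) →
            c x = c y

/-- `e` is the increasing enumeration (along the ordinals below `η`) of `A`. -/
def IsIncreasingEnum (e : Ordinal.{0} → Ordinal.{0}) (η : Ordinal.{0})
    (A : Set Ordinal.{0}) : Prop :=
  (∀ ζ < η, e ζ ∈ A) ∧
  (∀ ζ ξ : Ordinal.{0}, ζ < ξ → ξ < η → e ζ < e ξ) ∧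
  (∀ a ∈ A, ∃ ζ < η, e ζ = a)

/-- The tail cone Halpern–Läuchli theorem `HL^tc(d,<κ,κ)`. -/
def HLtc (d : ℕ) (κ : Cardinal.{0}) : Prop :=
  ∀ T : Fin d → Set (SeqNode κ), (∀ i, IsRegularTree κ (T i)) →
    ∀ σ : Ordinal.{0} → Cardinal.{0}, (∀ ζ < κ.ord, 0 < σ ζ ∧ σ ζ < κ) →
      ∀ c : Ordinal.{0} → (Fin d → SeqNode κ) → Ordinal.{0},
        (∀ ζ < κ.ord, ∀ x ∈ LevelProd T, c ζ x < (σ ζ).ord) →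
        ∃ T' : Fin d → Set (SeqNode κ), ∃ A : Set Ordinal.{0},
          ∃ e : Ordinal.{0} → Ordinal.{0},
            (∀ i, IsStrongSubtree κ (T' i) (T i) A) ∧
            IsIncreasingEnum e κ.ord A ∧
            ∀ ζ ξ : Ordinal.{0}, ζ ≤ ξ → ξ < κ.ord →
              ∀ t : Fin d → SeqNode κ, (∀ i, t i ∈ SeqLevel (T' i) (e ξ)) →
                c ζ t = c ζ (fun i => (t i).restrict (e ζ))

/-- The modified tail cone Halpern–Läuchli theorem. -/
def HLtcMod (d : ℕ) (κ : Cardinal.{0}) : Prop :=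
  ∀ T : Fin d → Set (SeqNode κ), (∀ i, IsRegularTree κ (T i)) →
    ∀ σ : Ordinal.{0} → Cardinal.{0}, (∀ ζ < κ.ord, 0 < σ ζ ∧ σ ζ < κ) →
      ∀ c : Ordinal.{0} → (Fin d → SeqNode κ) → Ordinal.{0},
        (∀ ζ < κ.ord, ∀ x ∈ LevelProd T, c ζ x < (σ ζ).ord) →
        ∃ T' : Fin d → Set (SeqNode κ), ∃ A : Set Ordinal.{0},
          ∃ e : Ordinal.{0} → Ordinal.{0},
            (∀ i, IsStrongSubtree κ (T' i) (T i) A) ∧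
            IsIncreasingEnum e κ.ord A ∧
            ∃ μ : Ordinal.{0} → Ordinal.{0},
              (∀ γ < κ.ord, γ ≤ μ γ ∧ μ γ < κ.ord) ∧
              ∀ ζ γ : Ordinal.{0}, ζ ≤ γ → γ < κ.ord →
                ∀ t : Fin d → SeqNode κ, (∀ i, t i ∈ SeqLevel (T' i) (e γ)) →
                  c (μ ζ) t = c (μ ζ) (fun i => (t i).restrict (e ζ))

/-- `κ` is strongly inaccessible: uncountable, regular, and a strong limit. -/
def StronglyInaccessible (κ : Cardinal.{0}) : Prop :=
  ℵ₀ < κ ∧ κ.IsRegular ∧ ∀ lam : Cardinal.{0}, lam < κ → (2 : Cardinal.{0}) ^ lam < κ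

/-- `C` is a club (closed unbounded) subset of the ordinals below `η`. -/
def IsClubIn (C : Set Ordinal.{0}) (η : Ordinal.{0}) : Prop :=
  C ⊆ Set.Iio η ∧ (∀ β < η, ∃ γ ∈ C, β ≤ γ) ∧
    ∀ s ⊆ C, s.Nonempty → sSup s < η → sSup s ∈ C

/-- `S` is a stationary subset of the ordinals below `η`. -/
def IsStationaryIn (S : Set Ordinal.{0}) (η : Ordinal.{0}) : Prop :=
  ∀ C : Set Ordinal.{0}, IsClubIn C η → (S ∩ C).Nonempty

/-- `U` is an ultrafilter on the ordinals below `η`. -/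
def IsUltrafilterOn (U : Set (Set Ordinal.{0})) (η : Ordinal.{0}) : Prop :=
  (∀ A ∈ U, A ⊆ Set.Iio η) ∧ Set.Iio η ∈ U ∧ (∅ : Set Ordinal.{0}) ∉ U ∧
  (∀ A ∈ U, ∀ B : Set Ordinal.{0}, A ⊆ B → B ⊆ Set.Iio η → B ∈ U) ∧
  (∀ A ∈ U, ∀ B ∈ U, A ∩ B ∈ U) ∧
  (∀ A : Set Ordinal.{0}, A ⊆ Set.Iio η → (A ∈ U ∨ Set.Iio η \ A ∈ U))

/-- `U` is `κ`-complete: closed under intersections of fewer than `κ` of its members. -/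
def IsKappaComplete (U : Set (Set Ordinal.{0})) (κ : Cardinal.{0}) : Prop :=
  ∀ s : Set (Set Ordinal.{0}), s ⊆ U → s.Nonempty →
    Cardinal.mk ↥s < Cardinal.lift.{1} κ → ⋂₀ s ∈ U

/-- `U` is nonprincipal. -/
def IsNonprincipal (U : Set (Set Ordinal.{0})) : Prop :=
  ∀ β : Ordinal.{0}, ({β} : Set Ordinal.{0}) ∉ U

/-- `U` is a normal ultrafilter on `κ`: a nonprincipal `κ`-complete ultrafilter closed
under diagonal intersections. -/
def IsNormalUltrafilterOn (U : Set (Set Ordinal.{0})) (κ : Cardinal.{0}) : Prop :=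
  IsUltrafilterOn U κ.ord ∧ IsKappaComplete U κ ∧ IsNonprincipal U ∧
    ∀ A : Ordinal.{0} → Set Ordinal.{0}, (∀ α < κ.ord, A α ∈ U) →
      {β : Ordinal.{0} | β < κ.ord ∧ ∀ α < β, β ∈ A α} ∈ U

/-- `κ` is a measurable cardinal. -/
def IsMeasurableCard (κ : Cardinal.{0}) : Prop :=
  ℵ₀ < κ ∧ ∃ U : Set (Set Ordinal.{0}),
    IsUltrafilterOn U κ.ord ∧ IsKappaComplete U κ ∧ IsNonprincipal U

/-- The set of (ordinals which are) infinite cardinals `α < κ` with `σ < α` at which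
`SDHL(d,σ,α)` holds, viewed as a set of ordinals below `κ`. -/
def SDHLset (d : ℕ) (σ κ : Cardinal.{0}) : Set Ordinal.{0} :=
  {β : Ordinal.{0} | β < κ.ord ∧ ℵ₀ ≤ β.card ∧ β.card.ord = β ∧ σ < β.card ∧
    SDHL d σ β.card}


theorem seqnode_ext' {κ : Cardinal.{0}} {s t : SeqNode κ} (h1 : s.len = t.len)
    (h2 : ∀ β, s.val β = t.val β) : s = t := by
  cases s; cases t
  simp only [SeqNode.mk.injEq]
  exact ⟨h1, funext h2⟩

theorem restrict_init' {κ : Cardinal.{0}} (t : SeqNode κ) (β : Ordinal.{0}) :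
    (t.restrict β).Init t := by
  refine ⟨min_le_right _ _, fun γ hγ => ?_⟩
  exact if_pos hγ

theorem restrict_len' {κ : Cardinal.{0}} (t : SeqNode κ) (β : Ordinal.{0}) :
    (t.restrict β).len = min β t.len := rfl

/-- For infinite κ, the tail cone Halpern–Läuchli theorem implies
HL(d,σ,κ) for every cardinal 0 < σ < κ. -/
theorem hltc_implies_hl (d : ℕ) (hd : 1 ≤ d) (κ : Cardinal.{0}) (hκ : ℵ₀ ≤ κ)
    (h : HLtc d κ) :
    ∀ σ : Cardinal.{0}, 0 < σ → σ < κ → HL d σ κ :=  by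
  intro σ hσ0 hσκ T hT c hc
  obtain ⟨T', A, e, hsub, henum, htail⟩ :=
    h T hT (fun _ => σ) (fun ζ _ => ⟨hσ0, hσκ⟩) (fun _ => c)
      (fun ζ _ x hx => hc x hx)
  have hκ0 : (0 : Ordinal.{0}) < κ.ord := by
    rw [← Cardinal.ord_zero]
    exact Cardinal.ord_lt_ord.mpr (lt_of_lt_of_le Cardinal.aleph0_pos hκ)
  have he0A : e 0 ∈ A := henum.1 0 hκ0
  have hmin : ∀ a ∈ A, e 0 ≤ a := by
    intro a ha
    obtain ⟨ζ, hζ, rfl⟩ := henum.2.2 a ha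
    rcases eq_or_ne ζ 0 with rfl | hne
    · exact le_rfl
    · exact (henum.2.1 0 ζ (pos_iff_ne_zero.mpr hne) hζ).le
  -- T' i has at most one node of any length α ≤ e 0
  have huniq : ∀ α : Ordinal.{0}, ∀ i : Fin d, ∀ s t : SeqNode κ,
      s ∈ T' i → t ∈ T' i → s.len = α → t.len = α → α ≤ e 0 → s = t := by
    intro α
    induction α using Ordinal.induction with
    | h α IH =>
      intro i s t hs ht hsl htl hα
      have htree : IsSeqTree (T' i) := (hsub i).2.1.1
      rcases Ordinal.zero_or_succ_or_isSuccLimit α with h0 | ⟨β, hβ⟩ | hlim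
      · subst h0
        refine seqnode_ext' (hsl.trans htl.symm) (fun γ => ?_)
        rw [s.val_eq_zero γ (by rw [hsl]; exact zero_le),
          t.val_eq_zero γ (by rw [htl]; exact zero_le)]
      · -- successor case
        have hβ1 : α = β + 1 := by rw [← hβ, Ordinal.add_one_eq_succ]
        have hβα : β < α := by rw [← hβ]; exact Order.lt_succ β
        have lens : (s.restrict β).len = β := by
          rw [restrict_len', hsl]; exact min_eq_left hβα.le
        have lent : (t.restrict β).len = β := by
          rw [restrict_len', htl]; exact min_eq_left hβα.le
        have hsr : s.restrict β ∈ T' i := htree s hs _ (restrict_init' s β)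
        have htr : t.restrict β ∈ T' i := htree t ht _ (restrict_init' t β)
        have hrr : s.restrict β = t.restrict β :=
          IH β hβα i _ _ hsr htr lens lent (hβα.le.trans hα)
        have hβnA : β ∉ A := fun hmem =>
          absurd (hmin β hmem) (not_le.mpr (hβα.trans_le hα))
        obtain ⟨u, -, hun⟩ := ((hsub i).2.2.2 _ hsr).2 (by rw [lens]; exact hβnA)
        have hes : s = u := hun s ⟨hs, restrict_init' s β, by rw [lens, hsl, hβ1]⟩
        have het : t = u := by
          rw [hrr] at hun
          exact hun t ⟨ht, restrict_init' t β, by rw [lent, htl, hβ1]⟩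
        rw [hes, het]
      · -- limit case
        refine seqnode_ext' (hsl.trans htl.symm) (fun γ => ?_)
        rcases lt_or_ge γ α with hγ | hγ
        · have hγ1 : γ + 1 < α := by
            have := hlim.succ_lt hγ; rwa [Ordinal.add_one_eq_succ]
          have lens : (s.restrict (γ + 1)).len = γ + 1 := by
            rw [restrict_len', hsl]; exact min_eq_left hγ1.le
          have lent : (t.restrict (γ + 1)).len = γ + 1 := by
            rw [restrict_len', htl]; exact min_eq_left hγ1.le
          have heq := IH (γ + 1) hγ1 i (s.restrict (γ + 1)) (t.restrict (γ + 1))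
            (htree s hs _ (restrict_init' s _)) (htree t ht _ (restrict_init' t _))
            lens lent (hγ1.le.trans hα)
          have h1 : (s.restrict (γ + 1)).val γ = s.val γ :=
            (restrict_init' s (γ + 1)).2 γ (by rw [lens, Ordinal.add_one_eq_succ]; exact Order.lt_succ γ)
          have h2 : (t.restrict (γ + 1)).val γ = t.val γ :=
            (restrict_init' t (γ + 1)).2 γ (by rw [lent, Ordinal.add_one_eq_succ]; exact Order.lt_succ γ)
          rw [← h1, ← h2, heq]
        · rw [s.val_eq_zero γ (by rw [hsl]; exact hγ),
            t.val_eq_zero γ (by rw [htl]; exact hγ)]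
  refine ⟨T', A, hsub, ?_⟩
  intro x hx y hy
  obtain ⟨α, hαA, hxl⟩ := hx
  obtain ⟨β, hβA, hyl⟩ := hy
  obtain ⟨ξ, hξ, rfl⟩ := henum.2.2 α hαA
  obtain ⟨ξ', hξ', rfl⟩ := henum.2.2 β hβA
  have h1 := htail 0 ξ zero_le hξ x hxl
  have h2 := htail 0 ξ' zero_le hξ' y hyl
  show c x = c y
  calc c x = (fun _ : Ordinal.{0} => c) 0 x := rfl
    _ = (fun _ : Ordinal.{0} => c) 0 (fun i => (x i).restrict (e 0)) := h1
    _ = (fun _ : Ordinal.{0} => c) 0 (fun i => (y i).restrict (e 0)) := by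
        refine congrArg _ (funext fun i => ?_)
        have hx0 : e 0 ≤ e ξ := hmin _ (henum.1 ξ hξ)
        have hy0 : e 0 ≤ e ξ' := hmin _ (henum.1 ξ' hξ')
        have htreex : IsSeqTree (T' i) := (hsub i).2.1.1
        refine huniq (e 0) i _ _
          (htreex _ (hxl i).1 _ (restrict_init' _ _))
          (htreex _ (hyl i).1 _ (restrict_init' _ _)) ?_ ?_ le_rfl
        · rw [restrict_len', (hxl i).2]; exact min_eq_left hx0
        · rw [restrict_len', (hyl i).2]; exact min_eq_left hy0
    _ = (fun _ : Ordinal.{0} => c) 0 y := h2.symm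
    _ = c y := rfl
end

section
/- Let κ be a cardinal such that either κ is strongly inaccessible, or cf(κ) ≥ ω₁ and κ is a limit of strongly inaccessible cardinals. Let 1 ≤ d < ω and 1 ≤ σ < κ, and assume that the set of infinite cardinals α < κ with σ < α for which SDHL(d,σ,α) holds is a stationary subset of κ. Then SDHL(d,σ,κ) holds. -/
open Cardinal Set

/-! ### Auxiliary development for `sdhl_reflects` -/

namespace SeqNode

variable {κ : Cardinal.{0}}

theorem ext' {s t : SeqNode κ} (hlen : s.len = t.len)
    (hval : ∀ β < s.len, s.val β = t.val β) : s = t := by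
  obtain ⟨ls, hls, vs, hvs, hzs⟩ := s
  obtain ⟨lt, hlt, vt, hvt, hzt⟩ := t
  dsimp only at hlen hval
  subst hlen
  have hv : vs = vt := by
    funext β
    by_cases hβ : β < ls
    · exact hval β hβ
    · rw [hzs β (not_lt.mp hβ), hzt β (not_lt.mp hβ)]
  subst hv
  rfl

theorem init_refl (t : SeqNode κ) : t.Init t := ⟨le_rfl, fun _ _ => rfl⟩

theorem Init.trans {s t u : SeqNode κ} (h1 : s.Init t) (h2 : t.Init u) : s.Init u :=
  ⟨h1.1.trans h2.1, fun β hβ => (h1.2 β hβ).trans (h2.2 β (lt_of_lt_of_le hβ h1.1))⟩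

theorem Init.eq_of_le_len {s t : SeqNode κ} (h : s.Init t) (hle : t.len ≤ s.len) : s = t :=
  ext' (le_antisymm h.1 hle) h.2

theorem init_comp {s t u : SeqNode κ} (hs : s.Init u) (ht : t.Init u) :
    s.Init t ∨ t.Init s := by
  rcases le_total s.len t.len with h | h
  · exact Or.inl ⟨h, fun β hβ => (hs.2 β hβ).trans
      ((ht.2 β (lt_of_lt_of_le hβ h)).symm)⟩
  · exact Or.inr ⟨h, fun β hβ => (ht.2 β hβ).trans
      ((hs.2 β (lt_of_lt_of_le hβ h)).symm)⟩

theorem restrict_len {t : SeqNode κ} {β : Ordinal.{0}} (h : β ≤ t.len) :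
    (t.restrict β).len = β := min_eq_left h

theorem restrict_init (t : SeqNode κ) (β : Ordinal.{0}) : (t.restrict β).Init t := by
  refine ⟨min_le_right _ _, fun γ hγ => ?_⟩
  have : γ < min β t.len := hγ
  simp only [restrict, if_pos this]

theorem chain_val_eq {s t : SeqNode κ} (h : s.Init t ∨ t.Init s) {γ : Ordinal.{0}}
    (hγs : γ < s.len) (hγt : γ < t.len) : s.val γ = t.val γ := by
  rcases h with h | h
  · exact h.2 γ hγs
  · exact (h.2 γ hγt).symm


theorem olt_succ_iff {a b : Ordinal.{0}} : a < b + 1 ↔ a ≤ b := by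
  rw [Ordinal.add_one_eq_succ]; exact Order.lt_succ_iff

theorem oself_lt_succ (a : Ordinal.{0}) : a < a + 1 := by
  rw [Ordinal.add_one_eq_succ]; exact Order.lt_succ a

/-- The node of length `ζ` with all values zero. -/
noncomputable def zNode (κ : Cardinal.{0}) (ζ : Ordinal.{0}) (h : ζ < κ.ord) : SeqNode κ where
  len := ζ
  len_lt := h
  val := fun _ => 0
  val_lt := fun β hβ => lt_of_le_of_lt zero_le (hβ.trans h)
  val_eq_zero := fun _ _ => rfl

@[simp] theorem zNode_len (κ : Cardinal.{0}) (ζ : Ordinal.{0}) (h : ζ < κ.ord) :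
    (zNode κ ζ h).len = ζ := rfl

/-- Append one value at the end of a node. -/
noncomputable def snoc (t : SeqNode κ) (j : Ordinal.{0}) (hlen : t.len + 1 < κ.ord)
    (hj : j < κ.ord) : SeqNode κ where
  len := t.len + 1
  len_lt := hlen
  val := fun β => if β < t.len then t.val β else if β = t.len then j else 0
  val_lt := fun β hβ => by
    by_cases h1 : β < t.len
    · rw [if_pos h1]; exact t.val_lt β h1
    · rw [if_neg h1]
      have hle : β ≤ t.len := olt_succ_iff.mp hβ
      have : β = t.len := le_antisymm hle (not_lt.mp h1)
      rw [if_pos this]; exact hj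
  val_eq_zero := fun β hβ => by
    have hlt : t.len < β := lt_of_lt_of_le (oself_lt_succ t.len) hβ
    rw [if_neg (asymm hlt), if_neg (ne_of_gt hlt)]

@[simp] theorem snoc_len (t : SeqNode κ) (j : Ordinal.{0}) (h1 : t.len + 1 < κ.ord)
    (h2 : j < κ.ord) : (snoc t j h1 h2).len = t.len + 1 := rfl

theorem snoc_val_lt (t : SeqNode κ) (j : Ordinal.{0}) (h1 : t.len + 1 < κ.ord)
    (h2 : j < κ.ord) {β : Ordinal.{0}} (hβ : β < t.len) :
    (snoc t j h1 h2).val β = t.val β := if_pos hβ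

theorem snoc_val_last (t : SeqNode κ) (j : Ordinal.{0}) (h1 : t.len + 1 < κ.ord)
    (h2 : j < κ.ord) : (snoc t j h1 h2).val t.len = j := by
  show (if t.len < t.len then _ else if t.len = t.len then j else 0) = j
  rw [if_neg (lt_irrefl _), if_pos rfl]

theorem init_snoc (t : SeqNode κ) (j : Ordinal.{0}) (h1 : t.len + 1 < κ.ord)
    (h2 : j < κ.ord) : t.Init (snoc t j h1 h2) := by
  exact ⟨le_of_lt (oself_lt_succ t.len), fun β hβ => (snoc_val_lt t j h1 h2 hβ).symm⟩

end SeqNode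

section TreeLemmas

open SeqNode (oself_lt_succ olt_succ_iff)

variable {κ : Cardinal.{0}} {T : Set (SeqNode κ)}

theorem isBranch_sUnion_chain {c : Set (Set (SeqNode κ))} (hc : ∀ b ∈ c, IsBranch T b)
    (hchain : IsChain (· ⊆ ·) c) : IsBranch T (⋃₀ c) := by
  constructor
  · intro t ht
    obtain ⟨b, hb, htb⟩ := ht
    exact (hc b hb).1 htb
  · rintro s ⟨b1, hb1, hs⟩ t ⟨b2, hb2, ht⟩
    by_cases hbe : b1 = b2
    · subst hbe; exact (hc b1 hb1).2 s hs t ht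
    · rcases hchain hb1 hb2 hbe with h | h
      · exact (hc b2 hb2).2 s (h hs) t ht
      · exact (hc b1 hb1).2 s hs t (h ht)

theorem exists_maximal_branch {b0 : Set (SeqNode κ)} (hb0 : IsBranch T b0) :
    ∃ b, b0 ⊆ b ∧ IsMaximalBranch T b := by
  obtain ⟨m, hm0, hmax⟩ := zorn_subset_nonempty {b | IsBranch T b}
    (fun c hc hchain _ => ⟨⋃₀ c, isBranch_sUnion_chain (fun b hb => hc hb) hchain,
      fun s hs => subset_sUnion_of_mem hs⟩) b0 hb0
  refine ⟨m, hm0, hmax.prop, fun b' hb' hsub => ?_⟩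
  exact le_antisymm (hmax.le_of_ge hb' hsub) hsub

/-- Key extension lemma: any chain of nodes of `T` with lengths `≤ λ` has a common
extension in `T` at level `λ`. -/
theorem exists_level_ext (hT : IsRegularTree κ T) {b : Set (SeqNode κ)} (hbT : b ⊆ T)
    (hchain : ∀ s ∈ b, ∀ t ∈ b, s.Init t ∨ t.Init s) {lam : Ordinal.{0}}
    (hlam : lam < κ.ord) (hlen : ∀ s ∈ b, s.len ≤ lam) :
    ∃ w ∈ SeqLevel T lam, ∀ s ∈ b, s.Init w := by
  obtain ⟨m, hbm, hmax⟩ := exists_maximal_branch (T := T) ⟨hbT, hchain⟩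
  obtain ⟨w, hwm, hwlen⟩ := hT.2.2.2.2.1 m hmax lam hlam
  refine ⟨w, ⟨hmax.1.1 hwm, hwlen⟩, fun s hs => ?_⟩
  rcases hmax.1.2 s (hbm hs) w hwm with h | h
  · exact h
  · have : w = s := h.eq_of_le_len (by rw [hwlen]; exact hlen s hs)
    rw [← this]; exact SeqNode.init_refl w

theorem exists_node_ext (hT : IsRegularTree κ T) {t : SeqNode κ} (ht : t ∈ T)
    {lam : Ordinal.{0}} (hlam : lam < κ.ord) (hle : t.len ≤ lam) :
    ∃ w ∈ SeqLevel T lam, t.Init w := by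
  have h1 : ({t} : Set (SeqNode κ)) ⊆ T := Set.singleton_subset_iff.mpr ht
  have h2 : ∀ s ∈ ({t} : Set (SeqNode κ)), ∀ u ∈ ({t} : Set (SeqNode κ)),
      SeqNode.Init s u ∨ SeqNode.Init u s := by
    intro s hs u hu
    rw [Set.mem_singleton_iff] at hs hu
    rw [hs, hu]; exact Or.inl (SeqNode.init_refl t)
  have h3 : ∀ s ∈ ({t} : Set (SeqNode κ)), s.len ≤ lam := by
    intro s hs; rw [Set.mem_singleton_iff] at hs; rw [hs]; exact hle
  obtain ⟨w, hw, hinit⟩ := exists_level_ext hT h1 h2 hlam h3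
  exact ⟨w, hw, hinit t rfl⟩

/-- The set of immediate successors of `t` in `T`. -/
def succOf (T : Set (SeqNode κ)) (t : SeqNode κ) : Set (SeqNode κ) :=
  SeqLevel T (t.len + 1) ∩ Cone t

theorem succOf_nonempty (hT : IsRegularTree κ T) {t : SeqNode κ} (ht : t ∈ T)
    (h : t.len + 1 < κ.ord) : (succOf T t).Nonempty := by
  obtain ⟨w, hw, hinit⟩ := exists_node_ext hT ht h (le_of_lt (oself_lt_succ t.len))
  exact ⟨w, hw, hinit⟩

theorem mk_level_mono (hT : IsRegularTree κ T) {δ δ' : Ordinal.{0}} (h : δ ≤ δ')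
    (hδ' : δ' < κ.ord) :
    Cardinal.mk ↥(SeqLevel T δ) ≤ Cardinal.mk ↥(SeqLevel T δ') := by
  have hex : ∀ t : ↥(SeqLevel T δ), ∃ w ∈ SeqLevel T δ', (t : SeqNode κ).Init w :=
    fun t => exists_node_ext hT t.2.1 hδ' (by rw [t.2.2]; exact h)
  choose f hf hfi using hex
  refine Cardinal.mk_le_of_injective (f := fun t => (⟨f t, hf t⟩ : ↥(SeqLevel T δ'))) ?_
  intro t1 t2 he
  have he' : f t1 = f t2 := congrArg Subtype.val he
  have hc := SeqNode.init_comp (hfi t1) (he' ▸ hfi t2)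
  have hlen : (t1 : SeqNode κ).len = (t2 : SeqNode κ).len := by rw [t1.2.2, t2.2.2]
  rcases hc with hc | hc
  · exact Subtype.ext (hc.eq_of_le_len (le_of_eq hlen.symm))
  · exact Subtype.ext (hc.eq_of_le_len (le_of_eq hlen)).symm

end TreeLemmas

section EnumSucc

variable {κ : Cardinal.{0}} {T : Set (SeqNode κ)}

/-- The property that `e` enumerates the immediate successors of `t` in `T`,
with indices below `c.ord`. -/
def IsSuccEnum (T : Set (SeqNode κ)) (c : Cardinal.{0}) (t : SeqNode κ)
    (e : Ordinal.{0} → SeqNode κ) : Prop :=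
  (∀ j, e j ∈ succOf T t) ∧ (∀ y ∈ succOf T t, ∃ j, j < c.ord ∧ e j = y)

theorem exists_succEnum (hT : IsRegularTree κ T) {t : SeqNode κ} (ht : t ∈ T)
    (hlt : t.len + 1 < κ.ord) {c : Cardinal.{0}}
    (hb : Cardinal.mk ↥(succOf T t) ≤ Cardinal.lift.{1} c) :
    ∃ e, IsSuccEnum T c t e := by
  obtain ⟨y0, hy0⟩ := succOf_nonempty hT ht hlt
  have hne : Nonempty ↥(succOf T t) := ⟨⟨y0, hy0⟩⟩
  have hmk : Cardinal.mk ↥(succOf T t) ≤ Cardinal.mk ↥(Set.Iio c.ord) := by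
    rw [Ordinal.mk_Iio_ordinal, Cardinal.card_ord]; exact hb
  obtain ⟨f⟩ := (Cardinal.le_def _ _).mp hmk
  haveI : Nonempty ↥(succOf T t) := hne
  have hsurj : Function.Surjective (Function.invFun (⇑f)) :=
    Function.invFun_surjective f.injective
  refine ⟨fun j => if h : j < c.ord then ((Function.invFun (⇑f) ⟨j, h⟩ : ↥(succOf T t)) :
      SeqNode κ) else y0, fun j => ?_, fun y hy => ?_⟩
  · dsimp only
    by_cases h : j < c.ord
    · rw [dif_pos h]; exact (Function.invFun (⇑f) ⟨j, h⟩ : ↥(succOf T t)).2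
    · rw [dif_neg h]; exact hy0
  · obtain ⟨⟨j, hj⟩, hfj⟩ := hsurj ⟨y, hy⟩
    have hj' : j < c.ord := hj
    refine ⟨j, hj', ?_⟩
    dsimp only
    rw [dif_pos hj']
    have : (⟨j, hj'⟩ : ↥(Iio c.ord)) = ⟨j, hj⟩ := rfl
    rw [this, hfj]

open Classical in
/-- A (choice-based) enumeration of the immediate successors of `t` in `T`. -/
noncomputable def enumSucc (T : Set (SeqNode κ)) (c : Cardinal.{0}) (w0 : SeqNode κ)
    (t : SeqNode κ) : Ordinal.{0} → SeqNode κ :=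
  if h : ∃ e, IsSuccEnum T c t e then h.choose else fun _ => w0

theorem enumSucc_spec (hT : IsRegularTree κ T) {t : SeqNode κ} (ht : t ∈ T)
    (hlt : t.len + 1 < κ.ord) {c : Cardinal.{0}}
    (hb : Cardinal.mk ↥(succOf T t) ≤ Cardinal.lift.{1} c) (w0 : SeqNode κ) :
    IsSuccEnum T c t (enumSucc T c w0 t) := by
  have h := exists_succEnum hT ht hlt hb
  rw [enumSucc, dif_pos h]
  exact h.choose_spec

end EnumSucc

section Drec

open Classical

open SeqNode (oself_lt_succ olt_succ_iff)

variable {κ αc : Cardinal.{0}}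

/-- The decoding map: it sends a node `u` of the "universal" tree on `αc` to a node
of the tree `T`, by recursion on the length `ζ`;  at successor steps the last value
of `u` is used as an index into an enumeration of the immediate successors. -/
noncomputable def Drec (T : Set (SeqNode κ)) (τ : Ordinal.{0} → Cardinal.{0})
    (w0 : SeqNode κ) : Ordinal.{0} → SeqNode αc → SeqNode κ :=
  Ordinal.lt_wf.fix (C := fun _ => SeqNode αc → SeqNode κ)
    (fun ζ rec u =>
      if _ : ζ = 0 then (if h : (SeqLevel T 0).Nonempty then h.choose else w0)
      else if _ : ∃ ξ, ζ = ξ + 1 then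
        enumSucc T (τ (Ordinal.pred ζ)) w0
          (if hξ : Ordinal.pred ζ < ζ then rec (Ordinal.pred ζ) hξ u else w0)
          (u.val (Ordinal.pred ζ))
      else
        (if h : {w | w ∈ SeqLevel T ζ ∧
            ∀ ξ, ∀ hξ : ξ < ζ, (rec ξ hξ u).Init w}.Nonempty then h.choose else w0))

theorem Drec_zero (T : Set (SeqNode κ)) (τ : Ordinal.{0} → Cardinal.{0}) (w0 : SeqNode κ)
    (u : SeqNode αc) :
    Drec T τ w0 0 u = (if h : (SeqLevel T 0).Nonempty then h.choose else w0) := by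
  unfold Drec
  rw [WellFounded.fix_eq]
  rw [dif_pos rfl]

theorem Drec_succ (T : Set (SeqNode κ)) (τ : Ordinal.{0} → Cardinal.{0}) (w0 : SeqNode κ)
    (ξ : Ordinal.{0}) (u : SeqNode αc) :
    Drec T τ w0 (ξ + 1) u = enumSucc T (τ ξ) w0 (Drec T τ w0 ξ u) (u.val ξ) := by
  have h0 : (ξ + 1 : Ordinal.{0}) ≠ 0 :=
    (ne_of_gt (lt_of_le_of_lt zero_le (oself_lt_succ ξ)))
  have hpred : Ordinal.pred (ξ + 1) = ξ := by
    rw [Ordinal.add_one_eq_succ, Ordinal.pred_succ]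
  unfold Drec
  rw [WellFounded.fix_eq]
  rw [dif_neg h0, dif_pos ⟨ξ, rfl⟩, hpred, dif_pos (oself_lt_succ ξ)]

theorem Drec_limit (T : Set (SeqNode κ)) (τ : Ordinal.{0} → Cardinal.{0}) (w0 : SeqNode κ)
    {ζ : Ordinal.{0}} (hζ : Order.IsSuccLimit ζ) (u : SeqNode αc) :
    Drec T τ w0 ζ u = (if h : {w | w ∈ SeqLevel T ζ ∧
        ∀ ξ, ∀ _ : ξ < ζ, (Drec T τ w0 ξ u).Init w}.Nonempty then h.choose else w0) := by
  have h0 : ζ ≠ 0 := hζ.ne_zero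
  have hs : ¬ ∃ ξ, ζ = ξ + 1 := by
    rintro ⟨ξ, rfl⟩
    have := hζ.succ_lt (a := ξ) (oself_lt_succ ξ)
    rw [← Ordinal.add_one_eq_succ] at this
    exact absurd this (lt_irrefl _)
  unfold Drec
  rw [WellFounded.fix_eq]
  rw [dif_neg h0, dif_neg hs]

end Drec

section DrecSpec

open Classical
open SeqNode (oself_lt_succ olt_succ_iff)

variable {κ αc : Cardinal.{0}} {T : Set (SeqNode κ)} {τ : Ordinal.{0} → Cardinal.{0}}
  {w0 : SeqNode κ}

theorem Drec_spec (hT : IsRegularTree κ T) (hκ : ℵ₀ ≤ κ)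
    (hτ : ∀ t ∈ T, t.len + 1 < κ.ord →
      Cardinal.mk ↥(succOf T t) ≤ Cardinal.lift.{1} (τ t.len))
    (u : SeqNode αc) : ∀ ζ, ζ < κ.ord →
    Drec T τ w0 ζ u ∈ T ∧ (Drec T τ w0 ζ u).len = ζ ∧
      ∀ ξ < ζ, (Drec T τ w0 ξ u).Init (Drec T τ w0 ζ u) := by
  intro ζ
  induction ζ using Ordinal.induction with
  | _ ζ IH =>
  intro hζ
  rcases Ordinal.zero_or_succ_or_isSuccLimit ζ with h0 | ⟨ξ0, hsucc⟩ | hlim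
  · subst h0
    have hpos : (0 : Ordinal.{0}) < κ.ord := by
      rw [Cardinal.lt_ord, Ordinal.card_zero]
      exact lt_of_lt_of_le Cardinal.aleph0_pos hκ
    have hne : (SeqLevel T 0).Nonempty := hT.2.2.1 0 hpos
    rw [Drec_zero, dif_pos hne]
    exact ⟨hne.choose_spec.1, hne.choose_spec.2, fun ξ hξ =>
      absurd hξ (not_lt_zero (a := ξ))⟩
  · rw [← Ordinal.add_one_eq_succ] at hsucc
    subst hsucc
    have hξ0 : ξ0 < κ.ord := (oself_lt_succ ξ0).trans hζ
    obtain ⟨hmem, hlen, hinit⟩ := IH ξ0 (oself_lt_succ ξ0) hξ0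
    have hlt : (Drec T τ w0 ξ0 u).len + 1 < κ.ord := by rw [hlen]; exact hζ
    have hb := hτ _ hmem hlt
    rw [hlen] at hb
    have spec := enumSucc_spec hT hmem hlt hb w0
    have hsmem := spec.1 (u.val ξ0)
    rw [Drec_succ]
    obtain ⟨⟨hwT, hwlen⟩, hwcone⟩ := hsmem
    refine ⟨hwT, by rw [hwlen, hlen], fun ξ hξ => ?_⟩
    have hle : ξ ≤ ξ0 := olt_succ_iff.mp hξ
    rcases eq_or_lt_of_le hle with rfl | hlt'
    · exact hwcone
    · exact (hinit ξ hlt').trans hwcone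
  · have hchainlem : ∀ ξ1 < ζ, ∀ ξ2 < ζ, ξ1 ≤ ξ2 →
        (Drec T τ w0 ξ1 u).Init (Drec T τ w0 ξ2 u) := by
      intro ξ1 h1 ξ2 h2 hle
      rcases eq_or_lt_of_le hle with rfl | hlt'
      · exact SeqNode.init_refl _
      · exact (IH ξ2 h2 (h2.trans hζ)).2.2 ξ1 hlt'
    set b : Set (SeqNode κ) := (fun ξ => Drec T τ w0 ξ u) '' (Set.Iio ζ) with hb
    have hbT : b ⊆ T := by
      rintro s ⟨ξ, hξ, rfl⟩
      exact (IH ξ hξ (hξ.trans hζ)).1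
    have hchain : ∀ s ∈ b, ∀ t ∈ b, s.Init t ∨ t.Init s := by
      rintro s ⟨ξ1, h1, rfl⟩ t ⟨ξ2, h2, rfl⟩
      rcases le_total ξ1 ξ2 with h | h
      · exact Or.inl (hchainlem ξ1 h1 ξ2 h2 h)
      · exact Or.inr (hchainlem ξ2 h2 ξ1 h1 h)
    have hlenb : ∀ s ∈ b, s.len ≤ ζ := by
      rintro s ⟨ξ, hξ, rfl⟩
      rw [(IH ξ hξ (hξ.trans hζ)).2.1]
      exact le_of_lt hξ
    obtain ⟨w, hw, hwinit⟩ := exists_level_ext hT hbT hchain hζ hlenb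
    have hne : {w | w ∈ SeqLevel T ζ ∧
        ∀ ξ, ∀ _ : ξ < ζ, (Drec T τ w0 ξ u).Init w}.Nonempty :=
      ⟨w, hw, fun ξ hξ => hwinit _ ⟨ξ, hξ, rfl⟩⟩
    rw [Drec_limit T τ w0 hlim, dif_pos hne]
    exact ⟨hne.choose_spec.1.1, hne.choose_spec.1.2, hne.choose_spec.2⟩

theorem Drec_congr (u u' : SeqNode αc) : ∀ ζ, (∀ ξ < ζ, u.val ξ = u'.val ξ) →
    Drec T τ w0 ζ u = Drec T τ w0 ζ u' := by
  intro ζ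
  induction ζ using Ordinal.induction with
  | _ ζ IH =>
  intro hval
  rcases Ordinal.zero_or_succ_or_isSuccLimit ζ with h0 | ⟨ξ0, hsucc⟩ | hlim
  · subst h0; rw [Drec_zero, Drec_zero]
  · rw [← Ordinal.add_one_eq_succ] at hsucc
    subst hsucc
    rw [Drec_succ, Drec_succ,
      IH ξ0 (oself_lt_succ ξ0) (fun ξ hξ => hval ξ (hξ.trans (oself_lt_succ ξ0))),
      hval ξ0 (oself_lt_succ ξ0)]
  · have hD : ∀ ξ, ξ < ζ → Drec T τ w0 ξ u = Drec T τ w0 ξ u' :=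
      fun ξ hξ => IH ξ hξ (fun ξ' h' => hval ξ' (h'.trans hξ))
    have hset : {w | w ∈ SeqLevel T ζ ∧ ∀ ξ, ∀ _ : ξ < ζ, (Drec T τ w0 ξ u).Init w}
        = {w | w ∈ SeqLevel T ζ ∧ ∀ ξ, ∀ _ : ξ < ζ, (Drec T τ w0 ξ u').Init w} := by
      ext w
      constructor
      · rintro ⟨h1, h2⟩
        exact ⟨h1, fun ξ hξ => (hD ξ hξ) ▸ h2 ξ hξ⟩
      · rintro ⟨h1, h2⟩
        exact ⟨h1, fun ξ hξ => (hD ξ hξ).symm ▸ h2 ξ hξ⟩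
    rw [Drec_limit T τ w0 hlim, Drec_limit T τ w0 hlim, hset]

end DrecSpec

section UTree

open Classical
open SeqNode (oself_lt_succ olt_succ_iff)

variable {αc : Cardinal.{0}}

/-- The "universal" complete tree on `αc` with branching `τ ζ` at level `ζ`. -/
def UTree (αc : Cardinal.{0}) (τ : Ordinal.{0} → Cardinal.{0}) : Set (SeqNode αc) :=
  {u | ∀ ξ < u.len, u.val ξ < (τ ξ).ord}

/-- Pad a node with zeroes up to length `ζ`. -/
noncomputable def padNode (u : SeqNode αc) (ζ : Ordinal.{0}) (hζ : ζ < αc.ord)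
    (h : u.len ≤ ζ) : SeqNode αc where
  len := ζ
  len_lt := hζ
  val := fun γ => if γ < u.len then u.val γ else 0
  val_lt := fun γ hγ => by
    by_cases h1 : γ < u.len
    · rw [if_pos h1]; exact u.val_lt γ h1
    · rw [if_neg h1]
      exact lt_of_le_of_lt zero_le (hγ.trans hζ)
  val_eq_zero := fun γ hγ => by
    rw [if_neg (not_lt.mpr (h.trans hγ))]

theorem padNode_len (u : SeqNode αc) (ζ : Ordinal.{0}) (hζ : ζ < αc.ord) (h : u.len ≤ ζ) :
    (padNode u ζ hζ h).len = ζ := rfl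

theorem init_padNode (u : SeqNode αc) (ζ : Ordinal.{0}) (hζ : ζ < αc.ord) (h : u.len ≤ ζ) :
    u.Init (padNode u ζ hζ h) :=
  ⟨h, fun γ hγ => (if_pos hγ).symm⟩

theorem padNode_mem (τ : Ordinal.{0} → Cardinal.{0}) (hτ2 : ∀ ζ, 2 ≤ τ ζ)
    {u : SeqNode αc} (hu : u ∈ UTree αc τ) (ζ : Ordinal.{0}) (hζ : ζ < αc.ord)
    (h : u.len ≤ ζ) : padNode u ζ hζ h ∈ UTree αc τ := by
  intro ξ hξ
  show (if ξ < u.len then u.val ξ else 0) < (τ ξ).ord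
  by_cases h1 : ξ < u.len
  · rw [if_pos h1]; exact hu ξ h1
  · rw [if_neg h1]
    rw [Cardinal.lt_ord, Ordinal.card_zero]
    exact lt_of_lt_of_le (by norm_num) (hτ2 ξ)

theorem mem_of_compat {U b : Set (SeqNode αc)} (hmax : IsMaximalBranch U b)
    {x : SeqNode αc} (hxU : x ∈ U) (hcomp : ∀ v ∈ b, v.Init x ∨ x.Init v) : x ∈ b := by
  have hbr : IsBranch U (insert x b) := by
    constructor
    · exact Set.insert_subset hxU hmax.1.1
    · intro s hs t ht
      rcases Set.mem_insert_iff.mp hs with heq | hs'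
      · rcases Set.mem_insert_iff.mp ht with heq2 | ht'
        · rw [heq, heq2]; exact Or.inl (SeqNode.init_refl x)
        · rw [heq]
          rcases hcomp t ht' with h | h
          · exact Or.inr h
          · exact Or.inl h
      · rcases Set.mem_insert_iff.mp ht with heq2 | ht'
        · rw [heq2]; exact hcomp s hs'
        · exact hmax.1.2 s hs' t ht' 
  have := hmax.2 (insert x b) hbr (Set.subset_insert x b)
  rw [← this]
  exact Set.mem_insert x b

theorem UTree_regular (τ : Ordinal.{0} → Cardinal.{0}) (hαc : ℵ₀ ≤ αc)
    (hτ2 : ∀ ζ, 2 ≤ τ ζ)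
    (hτα : ∀ ζ < αc.ord, (τ ζ).ord < αc.ord)
    (hτmono : ∀ ξ ζ : Ordinal.{0}, ξ ≤ ζ → ζ < αc.ord → τ ξ ≤ τ ζ)
    (hpow : ∀ ζ < αc.ord, (τ ζ) ^ (ζ.card) < αc) :
    IsRegularTree αc (UTree αc τ) := by
  have hpos : (0 : Ordinal.{0}) < αc.ord := by
    rw [Cardinal.lt_ord, Ordinal.card_zero]
    exact lt_of_lt_of_le Cardinal.aleph0_pos hαc
  have hzmem : ∀ ζ (hζ : ζ < αc.ord), SeqNode.zNode αc ζ hζ ∈ UTree αc τ := by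
    intro ζ hζ ξ hξ
    show (0 : Ordinal.{0}) < (τ ξ).ord
    rw [Cardinal.lt_ord, Ordinal.card_zero]
    exact lt_of_lt_of_le (by norm_num) (hτ2 ξ)
  have htree : IsSeqTree (UTree αc τ) := by
    intro t ht s hs ξ hξ
    rw [hs.2 ξ hξ]
    exact ht ξ (lt_of_lt_of_le hξ hs.1)
  refine ⟨htree, fun t _ => t.len_lt, ?_, ?_, ?_, ?_⟩
  · -- levels nonempty
    intro ζ hζ
    exact ⟨SeqNode.zNode αc ζ hζ, hzmem ζ hζ, rfl⟩
  · -- level cardinalities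
    intro ζ hζ
    have hinj : Function.Injective (fun (u : ↥(SeqLevel (UTree αc τ) ζ)) =>
        (fun ξ : ↥(Set.Iio ζ) => (⟨(u : SeqNode αc).val ξ,
          lt_of_lt_of_le ((u : ↥(SeqLevel (UTree αc τ) ζ)).2.1 ξ
            (by rw [u.2.2]; exact ξ.2))
          (Cardinal.ord_le_ord.mpr (hτmono ξ ζ (le_of_lt ξ.2) hζ))⟩ :
          ↥(Set.Iio (τ ζ).ord)))) := by
      intro u1 u2 he
      apply Subtype.ext
      apply SeqNode.ext' (by rw [u1.2.2, u2.2.2])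
      intro β hβ
      have hβζ : β < ζ := by rw [← u1.2.2]; exact hβ
      have := congrFun he ⟨β, hβζ⟩
      exact congrArg Subtype.val this
    have h1 : Cardinal.mk ↥(SeqLevel (UTree αc τ) ζ) ≤
        Cardinal.mk (↥(Set.Iio ζ) → ↥(Set.Iio (τ ζ).ord)) :=
      Cardinal.mk_le_of_injective hinj
    have h2 : Cardinal.mk (↥(Set.Iio ζ) → ↥(Set.Iio (τ ζ).ord)) =
        Cardinal.lift.{1} ((τ ζ) ^ ζ.card) := by
      rw [← Cardinal.power_def, Ordinal.mk_Iio_ordinal, Ordinal.mk_Iio_ordinal,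
        Cardinal.card_ord, ← Cardinal.lift_power]
    rw [Cardinal.card_ord]
    exact lt_of_le_of_lt (h1.trans (le_of_eq h2)) (Cardinal.lift_lt.mpr (hpow ζ hζ))
  · -- maximal branches meet every level
    intro b hmax ζ hζ
    by_contra hno
    push_neg at hno
    -- first: every element of b has length < ζ
    have hlen : ∀ v ∈ b, v.len < ζ := by
      intro v hv
      by_contra hge
      push_neg at hge
      set x := v.restrict ζ with hx
      have hxlen : x.len = ζ := SeqNode.restrict_len hge
      have hxv : x.Init v := SeqNode.restrict_init v ζ
      have hxU : x ∈ UTree αc τ := htree v (hmax.1.1 hv) x hxv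
      have hxb : x ∈ b := by
        apply mem_of_compat hmax hxU
        intro w hw
        rcases hmax.1.2 w hw v hv with h | h
        · exact SeqNode.init_comp h hxv
        · exact Or.inr (hxv.trans h)
      exact hno x hxb hxlen
    -- b is nonempty (else insert a node of length ζ)
    rcases Set.eq_empty_or_nonempty b with rfl | hbne
    · exact hno (SeqNode.zNode αc ζ hζ)
        (mem_of_compat hmax (hzmem ζ hζ) (fun v hv => absurd hv (Set.notMem_empty v)))
        rfl
    -- build the union node y of the chain b
    have hbdd : BddAbove (SeqNode.len '' b) := by
      refine ⟨ζ, ?_⟩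
      rintro l ⟨v, hv, rfl⟩
      exact le_of_lt (hlen v hv)
    have hlne : (SeqNode.len '' b).Nonempty := hbne.image _
    set lam := sSup (SeqNode.len '' b) with hlam
    have hlamζ : lam ≤ ζ := csSup_le hlne (by rintro l ⟨v, hv, rfl⟩; exact le_of_lt (hlen v hv))
    have hlamlt : lam < αc.ord := lt_of_le_of_lt hlamζ hζ
    have hlenle : ∀ v ∈ b, v.len ≤ lam := fun v hv => le_csSup hbdd ⟨v, hv, rfl⟩
    set y : SeqNode αc := ⟨lam, hlamlt,
      fun γ => if h : ∃ v, v ∈ b ∧ γ < v.len then h.choose.val γ else 0,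
      fun γ _ => by
        by_cases h : ∃ v, v ∈ b ∧ γ < v.len
        · rw [dif_pos h]; exact h.choose.val_lt γ h.choose_spec.2
        · rw [dif_neg h]
          exact lt_of_le_of_lt zero_le hpos,
      fun γ hγ => by
        rw [dif_neg]
        rintro ⟨v, hv, hγv⟩
        exact absurd (lt_of_lt_of_le hγv (le_trans (hlenle v hv) hγ)) (lt_irrefl γ)⟩ with hy
    have hyval : ∀ γ, γ < lam → ∃ v, v ∈ b ∧ γ < v.len := by
      intro γ hγ
      obtain ⟨l, ⟨v, hv, rfl⟩, hγl⟩ := (lt_csSup_iff hbdd hlne).mp hγ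
      exact ⟨v, hv, hγl⟩
    have hyU : y ∈ UTree αc τ := by
      intro ξ hξ
      have hξlam : ξ < lam := hξ
      have hex := hyval ξ hξlam
      show (if h : ∃ v, v ∈ b ∧ ξ < v.len then h.choose.val ξ else 0) < (τ ξ).ord
      rw [dif_pos hex]
      exact hmax.1.1 hex.choose_spec.1 ξ hex.choose_spec.2
    have hyinit : ∀ v ∈ b, v.Init y := by
      intro v hv
      refine ⟨hlenle v hv, fun γ hγ => ?_⟩
      have hex : ∃ w, w ∈ b ∧ γ < w.len := ⟨v, hv, hγ⟩
      show v.val γ = (if h : ∃ w, w ∈ b ∧ γ < w.len then h.choose.val γ else 0)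
      rw [dif_pos hex]
      exact SeqNode.chain_val_eq (hmax.1.2 v hv hex.choose hex.choose_spec.1) hγ
        hex.choose_spec.2
    have hyb : y ∈ b := mem_of_compat hmax hyU (fun v hv => Or.inl (hyinit v hv))
    have hylen : y.len < ζ := hlen y hyb
    have hpadb : padNode y ζ hζ (le_of_lt hylen) ∈ b := by
      apply mem_of_compat hmax (padNode_mem τ hτ2 hyU ζ hζ (le_of_lt hylen))
      intro v hv
      exact Or.inl ((hyinit v hv).trans (init_padNode y ζ hζ (le_of_lt hylen)))
    exact hno _ hpadb (padNode_len y ζ hζ (le_of_lt hylen))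
  · -- perfect
    intro u hu
    have hsucc : u.len + 1 < αc.ord := by
      have := (Cardinal.isSuccLimit_ord hαc).succ_lt u.len_lt
      rwa [← Ordinal.add_one_eq_succ] at this
    have h0 : (0 : Ordinal.{0}) < αc.ord := hpos
    have h1 : (1 : Ordinal.{0}) < αc.ord := by
      rw [Cardinal.lt_ord, Ordinal.card_one]
      exact lt_of_lt_of_le Cardinal.one_lt_aleph0 hαc
    have hmem : ∀ (j : Ordinal.{0}) (hj : j < αc.ord), j.card < 2 →
        SeqNode.snoc u j hsucc hj ∈ UTree αc τ := by
      intro j hj hcard ξ hξ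
      have hle : ξ ≤ u.len := olt_succ_iff.mp (by
        rw [SeqNode.snoc_len] at hξ; exact hξ)
      rcases eq_or_lt_of_le hle with heq | hlt
      · rw [heq, SeqNode.snoc_val_last]
        rw [Cardinal.lt_ord]
        exact lt_of_lt_of_le hcard (hτ2 u.len)
      · rw [SeqNode.snoc_val_lt u j hsucc hj hlt]
        exact hu ξ hlt
    refine ⟨SeqNode.snoc u 0 hsucc h0, hmem 0 h0 (by simp), SeqNode.snoc u 1 hsucc h1,
      hmem 1 h1 (by norm_num), SeqNode.init_snoc u 0 hsucc h0,
      SeqNode.init_snoc u 1 hsucc h1, ?_, ?_⟩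
    · intro h
      have := h.2 u.len (by rw [SeqNode.snoc_len]; exact oself_lt_succ u.len)
      rw [SeqNode.snoc_val_last, SeqNode.snoc_val_last] at this
      exact zero_ne_one this
    · intro h
      have := h.2 u.len (by rw [SeqNode.snoc_len]; exact oself_lt_succ u.len)
      rw [SeqNode.snoc_val_last, SeqNode.snoc_val_last] at this
      exact one_ne_zero this

end UTree

section Club

theorem club_of_mono (κ : Cardinal.{0}) (hκ : ℵ₀ ≤ κ) (hcof : ℵ₀ < (κ.ord).cof)
    (F : Ordinal.{0} → Ordinal.{0})
    (hmono : ∀ a b : Ordinal.{0}, a ≤ b → b < κ.ord → F a ≤ F b)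
    (hbound : ∀ a < κ.ord, F a < κ.ord) :
    IsClubIn {β | β < κ.ord ∧ 0 < β ∧ ∀ δ < β, F δ < β} κ.ord := by
  have hlim : Order.IsSuccLimit κ.ord := Cardinal.isSuccLimit_ord hκ
  have hsucclt : ∀ a < κ.ord, a + 1 < κ.ord := by
    intro a ha
    have := hlim.succ_lt ha
    rwa [← Ordinal.add_one_eq_succ] at this
  refine ⟨fun β hβ => hβ.1, ?_, ?_⟩
  · -- unbounded
    intro β hβ
    set g : Ordinal.{0} → Ordinal.{0} := fun γ => max (γ + 1) (F γ + 1) with hg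
    set seq : ℕ → Ordinal.{0} := fun n => g^[n] (β + 1) with hseq
    have hseqlt : ∀ n, seq n < κ.ord := by
      intro n
      induction n with
      | zero => exact hsucclt β hβ
      | succ n ih =>
        show g^[n + 1] (β + 1) < κ.ord
        rw [Function.iterate_succ_apply']
        exact max_lt (hsucclt _ ih) (hsucclt _ (hbound _ ih))
    have hseqsucc : ∀ n, seq (n + 1) = g (seq n) := by
      intro n
      show g^[n + 1] (β + 1) = g (g^[n] (β + 1))
      rw [Function.iterate_succ_apply']
    have hbdd : BddAbove (Set.range seq) := by
      refine ⟨κ.ord, ?_⟩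
      rintro x ⟨n, rfl⟩
      exact le_of_lt (hseqlt n)
    set o : Ordinal.{0} := ⨆ n, seq n with ho
    have holt : o < κ.ord := by
      apply Ordinal.iSup_lt_ord _ hseqlt
      rwa [Cardinal.mk_denumerable]
    have hle : ∀ n, seq n ≤ o := fun n => le_ciSup hbdd n
    refine ⟨o, ⟨holt, ?_, ?_⟩, ?_⟩
    · exact lt_of_lt_of_le (lt_of_le_of_lt zero_le
        (lt_of_lt_of_le (SeqNode.oself_lt_succ β) (le_refl _))) (hle 0)
    · intro δ hδ
      have hex : ∃ n, δ < seq n := by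
        by_contra hcon
        push_neg at hcon
        exact absurd (ciSup_le hcon) (not_le.mpr hδ)
      obtain ⟨n, hn⟩ := hex
      have h1 : F δ ≤ F (seq n) := hmono δ (seq n) (le_of_lt hn) (hseqlt n)
      have h2 : F (seq n) < seq (n + 1) := by
        rw [hseqsucc n]
        exact lt_of_lt_of_le (SeqNode.oself_lt_succ _) (le_max_right _ _)
      exact lt_of_le_of_lt h1 (lt_of_lt_of_le h2 (hle (n + 1)))
    · exact le_of_lt (lt_of_lt_of_le (SeqNode.oself_lt_succ β) (hle 0))
  · -- closed
    intro s hs hne hsup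
    have hbdd : BddAbove s := ⟨κ.ord, fun x hx => le_of_lt (hs hx).1⟩
    refine ⟨hsup, ?_, ?_⟩
    · obtain ⟨γ, hγ⟩ := hne
      exact lt_of_lt_of_le (hs hγ).2.1 (le_csSup hbdd hγ)
    · intro δ hδ
      obtain ⟨γ, hγs, hδγ⟩ := (lt_csSup_iff hbdd hne).mp hδ
      exact lt_of_lt_of_le ((hs hγs).2.2 δ hδγ) (le_csSup hbdd hγs)

end Club

/-- If κ is strongly inaccessible, or has uncountable cofinality and is a
limit of strongly inaccessible cardinals, and SDHL(d,σ,α) holds for a stationary set of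
α < κ, then SDHL(d,σ,κ) holds. -/
theorem sdhl_reflects (κ : Cardinal.{0})
    (hκ : StronglyInaccessible κ ∨
      (Cardinal.aleph 1 ≤ Ordinal.cof κ.ord ∧
        ∀ β : Cardinal.{0}, β < κ →
          ∃ lam : Cardinal.{0}, β < lam ∧ lam < κ ∧ StronglyInaccessible lam))
    (d : ℕ) (hd : 1 ≤ d) (σ : Cardinal.{0}) (hσ : 1 ≤ σ) (hσκ : σ < κ)
    (hS : IsStationaryIn (SDHLset d σ κ) κ.ord) :
    SDHL d σ κ := by
  classical
  -- Basic consequences of the large-cardinal hypothesis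
  have hκpos : (0 : Cardinal.{0}) < κ := lt_of_lt_of_le (lt_of_lt_of_le zero_lt_one hσ) hσκ.le
  have hκℵ : ℵ₀ ≤ κ := by
    rcases hκ with h | h
    · exact le_of_lt h.1
    · obtain ⟨lam, _, hlamκ, hinacc⟩ := h.2 0 hκpos
      exact le_of_lt (lt_trans hinacc.1 hlamκ)
  have hSL : ∀ x < κ, (2 : Cardinal.{0}) ^ x < κ := by
    rcases hκ with h | h
    · exact fun x hx => h.2.2 x hx
    · intro x hx
      obtain ⟨lam, hxlam, hlamκ, hinacc⟩ := h.2 x hx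
      exact lt_trans (hinacc.2.2 x hxlam) hlamκ
  have hcof : ℵ₀ < (κ.ord).cof := by
    rcases hκ with h | h
    · rw [h.2.1.cof_eq]; exact h.1
    · exact lt_of_lt_of_le Cardinal.aleph0_lt_aleph_one h.1
  have hκlim : Order.IsSuccLimit κ.ord := Cardinal.isSuccLimit_ord hκℵ
  have hsucclt : ∀ a < κ.ord, a + 1 < κ.ord := by
    intro a ha
    have := hκlim.succ_lt ha
    rwa [← Ordinal.add_one_eq_succ] at this
  have hpos : (0 : Ordinal.{0}) < κ.ord := by
    rw [Cardinal.lt_ord, Ordinal.card_zero]; exact hκpos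
  intro T hT c hc
  -- Level cardinalities, descended to `Cardinal.{0}`
  have hlevbound : ∀ (i : Fin d) (ζ : Ordinal.{0}), ζ < κ.ord →
      Cardinal.mk ↥(SeqLevel (T i) ζ) ≤ Cardinal.lift.{1} κ := by
    intro i ζ hζ
    have := (hT i).2.2.2.1 ζ hζ
    rw [Cardinal.card_ord] at this
    exact le_of_lt this
  set lev : Fin d → Ordinal.{0} → Cardinal.{0} := fun i ζ =>
    if h : Cardinal.mk ↥(SeqLevel (T i) ζ) ≤ Cardinal.lift.{1} κ then
      (Cardinal.mem_range_lift_of_le h).choose else 0 with hlevdef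
  have hlev : ∀ (i : Fin d) (ζ : Ordinal.{0}), ζ < κ.ord →
      Cardinal.lift.{1} (lev i ζ) = Cardinal.mk ↥(SeqLevel (T i) ζ) := by
    intro i ζ hζ
    rw [hlevdef]
    dsimp only
    rw [dif_pos (hlevbound i ζ hζ)]
    exact (Cardinal.mem_range_lift_of_le (hlevbound i ζ hζ)).choose_spec
  have hlevlt : ∀ (i : Fin d) (ζ : Ordinal.{0}), ζ < κ.ord → lev i ζ < κ := by
    intro i ζ hζ
    have h1 := (hT i).2.2.2.1 ζ hζ
    rw [Cardinal.card_ord] at h1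
    rw [← Cardinal.lift_lt.{0,1}, hlev i ζ hζ]
    exact h1
  have hlevmono : ∀ (i : Fin d) (a b : Ordinal.{0}), a ≤ b → b < κ.ord →
      lev i a ≤ lev i b := by
    intro i a b hab hb
    have := mk_level_mono (hT i) hab hb
    rw [← hlev i a (lt_of_le_of_lt hab hb), ← hlev i b hb] at this
    exact Cardinal.lift_le.mp this
  -- The branching function τ
  set τ : Ordinal.{0} → Cardinal.{0} := fun ζ =>
    2 ⊔ (Finset.univ.sup (fun i : Fin d => lev i (ζ + 1))) with hτdef
  have hτ2 : ∀ ζ, 2 ≤ τ ζ := fun ζ => le_sup_left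
  have h2κ : (2 : Cardinal.{0}) < κ :=
    lt_of_lt_of_le (Cardinal.lt_aleph0.mpr ⟨2, by norm_num⟩) hκℵ
  have hτlt : ∀ ζ < κ.ord, τ ζ < κ := by
    intro ζ hζ
    apply max_lt h2κ
    rw [Finset.sup_lt_iff (lt_of_lt_of_le Cardinal.aleph0_pos hκℵ)]
    intro i _
    exact hlevlt i (ζ + 1) (hsucclt ζ hζ)
  have hτmono : ∀ (a b : Ordinal.{0}), a ≤ b → b < κ.ord → τ a ≤ τ b := by
    intro a b hab hb
    apply sup_le_sup_left
    apply Finset.sup_mono_fun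
    intro i _
    exact hlevmono i (a + 1) (b + 1)
      (by rw [Ordinal.add_one_eq_succ, Ordinal.add_one_eq_succ]; exact Order.succ_le_succ hab)
      (hsucclt b hb)
  -- The closure function F and its club
  set F : Ordinal.{0} → Ordinal.{0} := fun δ =>
    max ((τ δ).ord) (((2 : Cardinal.{0}) ^ (δ.card)).ord) with hFdef
  have hFmono : ∀ (a b : Ordinal.{0}), a ≤ b → b < κ.ord → F a ≤ F b := by
    intro a b hab hb
    apply max_le_max
    · exact Cardinal.ord_le_ord.mpr (hτmono a b hab hb)
    · exact Cardinal.ord_le_ord.mpr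
        (Cardinal.power_le_power_left (by norm_num) (Ordinal.card_le_card hab))
  have hFbound : ∀ a < κ.ord, F a < κ.ord := by
    intro a ha
    apply max_lt
    · exact Cardinal.ord_lt_ord.mpr (hτlt a ha)
    · exact Cardinal.ord_lt_ord.mpr (hSL a.card (Cardinal.lt_ord.mp ha))
  obtain ⟨α, hαS, hαC⟩ := hS _ (club_of_mono κ hκℵ hcof F hFmono hFbound)
  obtain ⟨hα1, hℵα, hord, hσα, hsdhl⟩ := hαS
  obtain ⟨-, -, hcl⟩ := hαC
  set αc : Cardinal.{0} := α.card with hαcdef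
  -- Reflection data at α
  have hτord : ∀ ζ < α, (τ ζ).ord < α := fun ζ hζ =>
    lt_of_le_of_lt (le_max_left _ _) (hcl ζ hζ)
  have hstrong : ∀ x < αc, (2 : Cardinal.{0}) ^ x < αc := by
    intro x hx
    have h1 : x.ord < α := by rw [← hord]; exact Cardinal.ord_lt_ord.mpr hx
    have h2 := lt_of_le_of_lt (le_max_right ((τ x.ord).ord) _) (hcl x.ord h1)
    rw [Cardinal.card_ord] at h2
    rw [← hord] at h2
    exact Cardinal.ord_lt_ord.mp h2
  have hτα : ∀ ζ < αc.ord, (τ ζ).ord < αc.ord := by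
    intro ζ hζ
    rw [hord] at hζ ⊢
    exact hτord ζ hζ
  have hτmono' : ∀ ξ ζ : Ordinal.{0}, ξ ≤ ζ → ζ < αc.ord → τ ξ ≤ τ ζ := by
    intro ξ ζ h hζ
    rw [hord] at hζ
    exact hτmono ξ ζ h (hζ.trans hα1)
  have hpow : ∀ ζ < αc.ord, (τ ζ) ^ (ζ.card) < αc := by
    intro ζ hζ
    have ha : τ ζ < αc := Cardinal.ord_lt_ord.mp (hτα ζ hζ)
    have hb : ζ.card < αc := Cardinal.lt_ord.mp hζ
    calc (τ ζ) ^ (ζ.card) ≤ ((2 : Cardinal.{0}) ^ (τ ζ)) ^ (ζ.card) :=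
          Cardinal.power_le_power_right (le_of_lt (Cardinal.cantor _))
      _ = (2 : Cardinal.{0}) ^ ((τ ζ) * ζ.card) := (Cardinal.power_mul).symm
      _ < αc := hstrong _ (Cardinal.mul_lt_of_lt hℵα ha hb)
  -- The universal tree `U` on `αc`
  have hUreg : IsRegularTree αc (UTree αc τ) :=
    UTree_regular τ hℵα hτ2 hτα hτmono' hpow
  -- decoding maps
  have hw0 : ∀ i : Fin d, (SeqLevel (T i) 0).Nonempty := fun i => (hT i).2.2.1 0 hpos
  set w0 : Fin d → SeqNode κ := fun i => (hw0 i).choose with hw0def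
  have hsuccbound : ∀ (i : Fin d), ∀ t ∈ T i, t.len + 1 < κ.ord →
      Cardinal.mk ↥(succOf (T i) t) ≤ Cardinal.lift.{1} (τ t.len) := by
    intro i t ht hlt
    have h2 : Cardinal.mk ↥(succOf (T i) t) ≤ Cardinal.mk ↥(SeqLevel (T i) (t.len + 1)) :=
      Cardinal.mk_le_mk_of_subset Set.inter_subset_left
    have h4 : lev i (t.len + 1) ≤ τ t.len := by
      have h5 : lev i (t.len + 1) ≤ Finset.univ.sup (fun i : Fin d => lev i (t.len + 1)) :=
        Finset.le_sup (f := fun i : Fin d => lev i (t.len + 1)) (Finset.mem_univ i)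
      exact h5.trans le_sup_right
    calc Cardinal.mk ↥(succOf (T i) t) ≤ Cardinal.mk ↥(SeqLevel (T i) (t.len + 1)) := h2
      _ = Cardinal.lift.{1} (lev i (t.len + 1)) := (hlev i _ hlt).symm
      _ ≤ Cardinal.lift.{1} (τ t.len) := Cardinal.lift_le.mpr h4
  set D : Fin d → SeqNode αc → SeqNode κ := fun i u => Drec (T i) τ (w0 i) u.len u
    with hDdef
  have hulen : ∀ u : SeqNode αc, u.len < κ.ord := by
    intro u
    have := u.len_lt
    rw [hord] at this
    exact this.trans hα1
  have hD : ∀ (i : Fin d) (u : SeqNode αc), D i u ∈ T i ∧ (D i u).len = u.len := by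
    intro i u
    obtain ⟨h1, h2, _⟩ := Drec_spec (w0 := w0 i) (hT i) hκℵ (hsuccbound i) u u.len (hulen u)
    exact ⟨h1, h2⟩
  have hDmono : ∀ (i : Fin d) (u u' : SeqNode αc), u.Init u' → (D i u).Init (D i u') := by
    intro i u u' h
    have hcongr : Drec (T i) τ (w0 i) u.len u = Drec (T i) τ (w0 i) u.len u' :=
      Drec_congr u u' u.len (fun ξ hξ => h.2 ξ hξ)
    rcases eq_or_lt_of_le h.1 with heq | hlt
    · have : u = u' := SeqNode.ext' heq h.2
      rw [this]
      exact SeqNode.init_refl _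
    · have hstep := (Drec_spec (w0 := w0 i) (hT i) hκℵ (hsuccbound i) u' u'.len (hulen u')).2.2 u.len hlt
      show (Drec (T i) τ (w0 i) u.len u).Init (Drec (T i) τ (w0 i) u'.len u')
      rw [hcongr]
      exact hstep
  -- the transported coloring
  set c' : (Fin d → SeqNode αc) → Ordinal.{0} := fun x => c (fun i => D i (x i)) with hc'def
  have hc' : ∀ x ∈ LevelProd (fun _ : Fin d => UTree αc τ), c' x < σ.ord := by
    intro x hx
    obtain ⟨β, hβ⟩ := hx
    apply hc
    exact ⟨β, fun i => ⟨(hD i (x i)).1, by rw [(hD i (x i)).2, (hβ i).2]⟩⟩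
  obtain ⟨X', hX'sub, hX'mat, hX'mono⟩ := hsdhl (fun _ => UTree αc τ) (fun _ => hUreg) c' hc'
  obtain ⟨a, b, hab, hbα, t', ht', hX'⟩ := hX'mat
  have haα : a < αc.ord := hab.trans hbα
  -- transport the matrix back
  refine ⟨fun i => D i '' X' i, ?_, ?_, ?_⟩
  · rintro i w ⟨x', _, rfl⟩
    exact (hD i x').1
  · refine ⟨a, b, hab, ?_, fun i => D i (t' i), ?_, ?_⟩
    · rw [hord] at hbα
      exact hbα.trans hα1
    · intro i
      exact ⟨(hD i (t' i)).1, by rw [(hD i (t' i)).2, (ht' i).2]⟩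
    · intro i
      constructor
      · rintro w ⟨x', hx', rfl⟩
        have := (hX' i).1 hx'
        exact ⟨(hD i x').1, by rw [(hD i x').2, this.2]⟩
      · -- domination
        intro y hy
        have hlen_t : (D i (t' i)).len = a := by rw [(hD i (t' i)).2, (ht' i).2]
        have hysucc : y ∈ succOf (T i) (D i (t' i)) := by
          show y ∈ SeqLevel (T i) ((D i (t' i)).len + 1) ∩ Cone (D i (t' i))
          rw [hlen_t]
          exact hy
        have hDT := (hD i (t' i)).1
        have hltκ : (D i (t' i)).len + 1 < κ.ord := by
          rw [hlen_t]
          apply hsucclt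
          have h6 := haα
          rw [hord] at h6
          exact h6.trans hα1
        have spec := enumSucc_spec (hT i) hDT hltκ (hsuccbound i _ hDT hltκ) (w0 i)
        obtain ⟨j, hj, hej⟩ := spec.2 y hysucc
        rw [hlen_t] at hj hej
        -- build the successor node in U
        have hsl : (t' i).len + 1 < αc.ord := by
          rw [(ht' i).2]
          have hab1 : a + 1 ≤ b := by
            rw [Ordinal.add_one_eq_succ]; exact Order.succ_le_of_lt hab
          exact lt_of_le_of_lt hab1 hbα
        have hjα : j < αc.ord := hj.trans (hτα a haα)
        set u'' : SeqNode αc := SeqNode.snoc (t' i) j hsl hjα with hu''def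
        have hu''U : u'' ∈ UTree αc τ := by
          intro ξ hξ
          rw [hu''def, SeqNode.snoc_len] at hξ
          rcases eq_or_lt_of_le (SeqNode.olt_succ_iff.mp hξ) with heq | hlt
          · rw [hu''def, heq, SeqNode.snoc_val_last, (ht' i).2]
            exact hj
          · rw [hu''def, SeqNode.snoc_val_lt _ _ _ _ hlt]
            exact (ht' i).1 ξ hlt
        have hDu'' : D i u'' = y := by
          have hu''len : u''.len = (t' i).len + 1 := rfl
          show Drec (T i) τ (w0 i) u''.len u'' = y
          rw [hu''len, Drec_succ]
          have hcongr : Drec (T i) τ (w0 i) (t' i).len u'' =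
              Drec (T i) τ (w0 i) (t' i).len (t' i) :=
            Drec_congr _ _ _ (fun ξ hξ => SeqNode.snoc_val_lt _ _ _ _ hξ)
          rw [hcongr]
          have : u''.val (t' i).len = j := SeqNode.snoc_val_last _ _ _ _
          rw [this]
          show enumSucc (T i) (τ (t' i).len) (w0 i) (D i (t' i)) j = y
          rw [(ht' i).2]
          exact hej
        have hu''mem : u'' ∈ SeqLevel (UTree αc τ) (a + 1) ∩ Cone (t' i) := by
          refine ⟨⟨hu''U, ?_⟩, SeqNode.init_snoc _ _ _ _⟩
          rw [hu''def, SeqNode.snoc_len, (ht' i).2]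
        obtain ⟨x', hx'X, hinit⟩ := (hX' i).2 u'' hu''mem
        exact ⟨D i x', ⟨x', hx'X, rfl⟩, hDu'' ▸ hDmono i u'' x' hinit⟩
  · -- monochromaticity
    intro x hx y hy
    obtain ⟨γx, hγx⟩ := hx
    obtain ⟨γy, hγy⟩ := hy
    have hxch : ∀ i, ∃ x', x' ∈ X' i ∧ D i x' = x i := by
      intro i
      obtain ⟨x', h1, h2⟩ := (hγx i).1
      exact ⟨x', h1, h2⟩
    have hych : ∀ i, ∃ y', y' ∈ X' i ∧ D i y' = y i := by
      intro i
      obtain ⟨y', h1, h2⟩ := (hγy i).1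
      exact ⟨y', h1, h2⟩
    choose px hpx1 hpx2 using hxch
    choose py hpy1 hpy2 using hych
    have hpxl : ∀ i, (px i).len = b := fun i => ((hX' i).1 (hpx1 i)).2
    have hpyl : ∀ i, (py i).len = b := fun i => ((hX' i).1 (hpy1 i)).2
    have hmono := hX'mono px ⟨b, fun i => ⟨hpx1 i, hpxl i⟩⟩ py ⟨b, fun i => ⟨hpy1 i, hpyl i⟩⟩
    have hxeq : x = fun i => D i (px i) := funext fun i => (hpx2 i).symm
    have hyeq : y = fun i => D i (py i) := funext fun i => (hpy2 i).symm
    rw [hxeq, hyeq]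
    exact hmono
end
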